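/- Let (h₁, h₂, h₃) be a centered random vector in ℝ³ with finite second moments, and let H denote the random symmetric 2×2 matrix with rows (h₁, h₃), (h₃, h₂). Assume H is rotation invariant in law, i.e., for every θ ∈ ℝ the matrix R(θ)ᵀ H R(θ) has the same law as H, where R(θ) is the rotation matrix with rows (cos θ, −sin θ), (sin θ, cos θ). Then E[h₁ h₃] = E[h₂ h₃] = 0 and E[h₁²] = E[h₂²] = 2·E[h₃²] + E[h₁ h₂]. Equivalently, setting σ² := E[h₃²] and c := E[h₁h₂], the covariance matrix of (h₁, h₂, h₃) has rows (2σ²+c, c, 0), (c, 2σ²+c, 0), (0, 0, σ²). -/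

import Mathlib

open MeasureTheory Real Matrix

instance {m n : Type*} : MeasurableSpace (Matrix m n ℝ) :=
  MeasurableSpace.pi

/-- The rotation matrix of angle `θ` in `ℝ²`. -/
noncomputable def rotMat (θ : ℝ) : Matrix (Fin 2) (Fin 2) ℝ :=
  !![Real.cos θ, -Real.sin θ; Real.sin θ, Real.cos θ]

private lemma intMulAux {Ω : Type*} [MeasurableSpace Ω] {P : Measure Ω} {f g : Ω → ℝ}
    (hf : MemLp f 2 P) (hg : MemLp g 2 P) : Integrable (fun ω => f ω * g ω) P := by
  rw [← memLp_one_iff_integrable]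
  exact hg.smul (r := 1) hf

private lemma aemeasMatAux {Ω : Type*} [MeasurableSpace Ω] {P : Measure Ω} {a b c d : Ω → ℝ}
    (ha : AEMeasurable a P) (hb : AEMeasurable b P) (hc : AEMeasurable c P)
    (hd : AEMeasurable d P) :
    AEMeasurable (fun ω => !![a ω, b ω; c ω, d ω]) P := by
  refine ⟨fun ω => !![ha.mk a ω, hb.mk b ω; hc.mk c ω, hd.mk d ω], ?_, ?_⟩
  · refine measurable_pi_iff.mpr ?_; intro i; rw [measurable_pi_iff]; intro j
    fin_cases i <;> fin_cases j <;> simp <;>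
      first
        | exact ha.measurable_mk
        | exact hb.measurable_mk
        | exact hc.measurable_mk
        | exact hd.measurable_mk
  · filter_upwards [ha.ae_eq_mk, hb.ae_eq_mk, hc.ae_eq_mk, hd.ae_eq_mk] with ω e1 e2 e3 e4
    rw [e1, e2, e3, e4]

private lemma rotConjMeasAux (θ : ℝ) :
    Measurable fun M : Matrix (Fin 2) (Fin 2) ℝ => (rotMat θ)ᵀ * M * rotMat θ := by
  refine measurable_pi_iff.mpr ?_; intro i; rw [measurable_pi_iff]; intro j
  simp only [Matrix.mul_apply]
  exact Finset.measurable_sum _ fun l _ =>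
    ((Finset.measurable_sum _ fun k _ => measurable_const.mul
      ((measurable_pi_apply l).comp (measurable_pi_apply k))).mul measurable_const)

private lemma rotConjPiHalfAux (a b c : ℝ) :
    (rotMat (π/2))ᵀ * !![a, c; c, b] * rotMat (π/2) = !![b, -c; -c, a] := by
  ext i j
  fin_cases i <;> fin_cases j <;>
    simp [rotMat, Matrix.mul_apply, Matrix.transpose_apply, Fin.sum_univ_two,
      Matrix.vecHead, Matrix.vecTail]

private lemma rotConjPiQuarterAux (a b c : ℝ) :
    (rotMat (π/4))ᵀ * !![a, c; c, b] * rotMat (π/4)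
    = !![(a+b)/2 + c, (b-a)/2; (b-a)/2, (a+b)/2 - c] := by
  ext i j
  fin_cases i <;> fin_cases j <;>
    simp [rotMat, Matrix.mul_apply, Matrix.transpose_apply, Fin.sum_univ_two,
      Real.cos_pi_div_four, Real.sin_pi_div_four, Matrix.vecHead, Matrix.vecTail] <;>
    ring_nf <;> rw [Real.sq_sqrt (by norm_num : (0:ℝ) ≤ 2)] <;> ring

/-- If the random symmetric matrix `H = !![h₁, h₃; h₃, h₂]`, built from a centered,
square-integrable random vector `(h₁,h₂,h₃)`, is rotation invariant in law,
then `E[h₁h₃] = E[h₂h₃] = 0` and `E[h₁²] = E[h₂²] = 2E[h₃²] + E[h₁h₂]`. -/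
theorem stmt_3 {Ω : Type*} [MeasurableSpace Ω] (P : Measure Ω) [IsProbabilityMeasure P]
    (h₁ h₂ h₃ : Ω → ℝ)
    (hL1 : MemLp h₁ 2 P) (hL2 : MemLp h₂ 2 P) (hL3 : MemLp h₃ 2 P)
    (hc1 : ∫ ω, h₁ ω ∂P = 0) (hc2 : ∫ ω, h₂ ω ∂P = 0) (hc3 : ∫ ω, h₃ ω ∂P = 0)
    (H : Ω → Matrix (Fin 2) (Fin 2) ℝ)
    (hH : H = fun ω => !![h₁ ω, h₃ ω; h₃ ω, h₂ ω])
    (hrot : ∀ θ : ℝ,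
      Measure.map (fun ω => (rotMat θ)ᵀ * H ω * rotMat θ) P = Measure.map H P) :
    (∫ ω, h₁ ω * h₃ ω ∂P = 0) ∧ (∫ ω, h₂ ω * h₃ ω ∂P = 0) ∧
    (∫ ω, h₁ ω ^ 2 ∂P = ∫ ω, h₂ ω ^ 2 ∂P) ∧
    (∫ ω, h₁ ω ^ 2 ∂P = 2 * (∫ ω, h₃ ω ^ 2 ∂P) + ∫ ω, h₁ ω * h₂ ω ∂P) := by
  -- measurability
  have hm1 : AEMeasurable h₁ P := hL1.aestronglyMeasurable.aemeasurable
  have hm2 : AEMeasurable h₂ P := hL2.aestronglyMeasurable.aemeasurable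
  have hm3 : AEMeasurable h₃ P := hL3.aestronglyMeasurable.aemeasurable
  have hHm : AEMeasurable H P := by
    rw [hH]; exact aemeasMatAux hm1 hm3 hm3 hm2
  -- the key transfer principle
  have key : ∀ (f : Matrix (Fin 2) (Fin 2) ℝ → ℝ), Measurable f → ∀ θ : ℝ,
      ∫ ω, f ((rotMat θ)ᵀ * H ω * rotMat θ) ∂P = ∫ ω, f (H ω) ∂P := by
    intro f hf θ
    have hg : AEMeasurable (fun ω => (rotMat θ)ᵀ * H ω * rotMat θ) P :=
      (rotConjMeasAux θ).comp_aemeasurable hHm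
    rw [← integral_map hg hf.aestronglyMeasurable,
      hrot θ, integral_map hHm hf.aestronglyMeasurable]
  have hf1 : Measurable fun M : Matrix (Fin 2) (Fin 2) ℝ => M 0 0 * M 0 1 :=
    Measurable.mul (f := fun M : Matrix (Fin 2) (Fin 2) ℝ => M 0 0) (g := fun M => M 0 1)
      ((measurable_pi_apply _).comp (measurable_pi_apply _))
      ((measurable_pi_apply _).comp (measurable_pi_apply _))
  have hf2 : Measurable fun M : Matrix (Fin 2) (Fin 2) ℝ => M 0 0 * M 0 0 :=
    Measurable.mul (f := fun M : Matrix (Fin 2) (Fin 2) ℝ => M 0 0) (g := fun M => M 0 0)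
      ((measurable_pi_apply _).comp (measurable_pi_apply _))
      ((measurable_pi_apply _).comp (measurable_pi_apply _))
  -- integrability of products
  have iaa : Integrable (fun ω => h₁ ω * h₁ ω) P := intMulAux hL1 hL1
  have ibb : Integrable (fun ω => h₂ ω * h₂ ω) P := intMulAux hL2 hL2
  have icc : Integrable (fun ω => h₃ ω * h₃ ω) P := intMulAux hL3 hL3
  have iab : Integrable (fun ω => h₁ ω * h₂ ω) P := intMulAux hL1 hL2
  have iac : Integrable (fun ω => h₁ ω * h₃ ω) P := intMulAux hL1 hL3
  have ibc : Integrable (fun ω => h₂ ω * h₃ ω) P := intMulAux hL2 hL3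
  -- integral of canonical quadratic combinations
  have isum : ∀ c1 c2 c3 c4 c5 c6 : ℝ,
      ∫ ω, (c1 * (h₁ ω * h₁ ω) + c2 * (h₂ ω * h₂ ω) + c3 * (h₃ ω * h₃ ω)
        + c4 * (h₁ ω * h₂ ω) + c5 * (h₁ ω * h₃ ω) + c6 * (h₂ ω * h₃ ω)) ∂P
      = c1 * ∫ ω, h₁ ω * h₁ ω ∂P + c2 * ∫ ω, h₂ ω * h₂ ω ∂P + c3 * ∫ ω, h₃ ω * h₃ ω ∂P
        + c4 * ∫ ω, h₁ ω * h₂ ω ∂P + c5 * ∫ ω, h₁ ω * h₃ ω ∂P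
        + c6 * ∫ ω, h₂ ω * h₃ ω ∂P := by
    intro c1 c2 c3 c4 c5 c6
    have j1 : Integrable (fun ω => c1 * (h₁ ω * h₁ ω)) P := iaa.const_mul c1
    have j2 : Integrable (fun ω => c2 * (h₂ ω * h₂ ω)) P := ibb.const_mul c2
    have j3 : Integrable (fun ω => c3 * (h₃ ω * h₃ ω)) P := icc.const_mul c3
    have j4 : Integrable (fun ω => c4 * (h₁ ω * h₂ ω)) P := iab.const_mul c4
    have j5 : Integrable (fun ω => c5 * (h₁ ω * h₃ ω)) P := iac.const_mul c5
    have j6 : Integrable (fun ω => c6 * (h₂ ω * h₃ ω)) P := ibc.const_mul c6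
    have k2 : Integrable (fun ω => c1 * (h₁ ω * h₁ ω) + c2 * (h₂ ω * h₂ ω)) P := j1.add j2
    have k3 : Integrable (fun ω => c1 * (h₁ ω * h₁ ω) + c2 * (h₂ ω * h₂ ω)
        + c3 * (h₃ ω * h₃ ω)) P := k2.add j3
    have k4 : Integrable (fun ω => c1 * (h₁ ω * h₁ ω) + c2 * (h₂ ω * h₂ ω)
        + c3 * (h₃ ω * h₃ ω) + c4 * (h₁ ω * h₂ ω)) P := k3.add j4
    have k5 : Integrable (fun ω => c1 * (h₁ ω * h₁ ω) + c2 * (h₂ ω * h₂ ω)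
        + c3 * (h₃ ω * h₃ ω) + c4 * (h₁ ω * h₂ ω) + c5 * (h₁ ω * h₃ ω)) P := k4.add j5
    rw [integral_add k5 j6, integral_add k4 j5, integral_add k3 j4, integral_add k2 j3,
      integral_add j1 j2, integral_const_mul, integral_const_mul, integral_const_mul,
      integral_const_mul, integral_const_mul, integral_const_mul]
  -- pointwise descriptions of the conjugated matrices
  have q2 : ∀ ω, (rotMat (π/2))ᵀ * H ω * rotMat (π/2)
      = !![h₂ ω, -h₃ ω; -h₃ ω, h₁ ω] := fun ω => by
    rw [congrFun hH ω]; exact rotConjPiHalfAux (h₁ ω) (h₂ ω) (h₃ ω)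
  have q4 : ∀ ω, (rotMat (π/4))ᵀ * H ω * rotMat (π/4)
      = !![(h₁ ω + h₂ ω)/2 + h₃ ω, (h₂ ω - h₁ ω)/2;
          (h₂ ω - h₁ ω)/2, (h₁ ω + h₂ ω)/2 - h₃ ω] := fun ω => by
    rw [congrFun hH ω]; exact rotConjPiQuarterAux (h₁ ω) (h₂ ω) (h₃ ω)
  -- right-hand sides
  have r1 : (fun ω => (fun M : Matrix (Fin 2) (Fin 2) ℝ => M 0 0 * M 0 1) (H ω))
      = fun ω => h₁ ω * h₃ ω := by
    funext ω; rw [congrFun hH ω]; simp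
  have r2 : (fun ω => (fun M : Matrix (Fin 2) (Fin 2) ℝ => M 0 0 * M 0 0) (H ω))
      = fun ω => h₁ ω * h₁ ω := by
    funext ω; rw [congrFun hH ω]; simp
  -- the four equations
  have E1 : (0:ℝ) * ∫ ω, h₁ ω * h₁ ω ∂P + 0 * ∫ ω, h₂ ω * h₂ ω ∂P
      + 0 * ∫ ω, h₃ ω * h₃ ω ∂P + 0 * ∫ ω, h₁ ω * h₂ ω ∂P
      + 0 * ∫ ω, h₁ ω * h₃ ω ∂P + (-1) * ∫ ω, h₂ ω * h₃ ω ∂P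
      = ∫ ω, h₁ ω * h₃ ω ∂P := by
    have h := key _ hf1 (π/2)
    rw [show (fun ω => (fun M : Matrix (Fin 2) (Fin 2) ℝ => M 0 0 * M 0 1)
        ((rotMat (π/2))ᵀ * H ω * rotMat (π/2)))
      = fun ω => (0:ℝ) * (h₁ ω * h₁ ω) + 0 * (h₂ ω * h₂ ω) + 0 * (h₃ ω * h₃ ω)
        + 0 * (h₁ ω * h₂ ω) + 0 * (h₁ ω * h₃ ω) + (-1) * (h₂ ω * h₃ ω)
      from funext fun ω => by { rw [q2 ω]; simp; try ring }, r1, isum] at h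
    exact h
  have E2 : (0:ℝ) * ∫ ω, h₁ ω * h₁ ω ∂P + 1 * ∫ ω, h₂ ω * h₂ ω ∂P
      + 0 * ∫ ω, h₃ ω * h₃ ω ∂P + 0 * ∫ ω, h₁ ω * h₂ ω ∂P
      + 0 * ∫ ω, h₁ ω * h₃ ω ∂P + 0 * ∫ ω, h₂ ω * h₃ ω ∂P
      = ∫ ω, h₁ ω * h₁ ω ∂P := by
    have h := key _ hf2 (π/2)
    rw [show (fun ω => (fun M : Matrix (Fin 2) (Fin 2) ℝ => M 0 0 * M 0 0)
        ((rotMat (π/2))ᵀ * H ω * rotMat (π/2)))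
      = fun ω => (0:ℝ) * (h₁ ω * h₁ ω) + 1 * (h₂ ω * h₂ ω) + 0 * (h₃ ω * h₃ ω)
        + 0 * (h₁ ω * h₂ ω) + 0 * (h₁ ω * h₃ ω) + 0 * (h₂ ω * h₃ ω)
      from funext fun ω => by { rw [q2 ω]; simp; try ring }, r2, isum] at h
    exact h
  have E3 : (-1/4 : ℝ) * ∫ ω, h₁ ω * h₁ ω ∂P + (1/4) * ∫ ω, h₂ ω * h₂ ω ∂P
      + 0 * ∫ ω, h₃ ω * h₃ ω ∂P + 0 * ∫ ω, h₁ ω * h₂ ω ∂P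
      + (-1/2) * ∫ ω, h₁ ω * h₃ ω ∂P + (1/2) * ∫ ω, h₂ ω * h₃ ω ∂P
      = ∫ ω, h₁ ω * h₃ ω ∂P := by
    have h := key _ hf1 (π/4)
    rw [show (fun ω => (fun M : Matrix (Fin 2) (Fin 2) ℝ => M 0 0 * M 0 1)
        ((rotMat (π/4))ᵀ * H ω * rotMat (π/4)))
      = fun ω => (-1/4 : ℝ) * (h₁ ω * h₁ ω) + (1/4) * (h₂ ω * h₂ ω) + 0 * (h₃ ω * h₃ ω)
        + 0 * (h₁ ω * h₂ ω) + (-1/2) * (h₁ ω * h₃ ω) + (1/2) * (h₂ ω * h₃ ω)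
      from funext fun ω => by { rw [q4 ω]; simp; try ring }, r1, isum] at h
    exact h
  have E4 : (1/4 : ℝ) * ∫ ω, h₁ ω * h₁ ω ∂P + (1/4) * ∫ ω, h₂ ω * h₂ ω ∂P
      + 1 * ∫ ω, h₃ ω * h₃ ω ∂P + (1/2) * ∫ ω, h₁ ω * h₂ ω ∂P
      + 1 * ∫ ω, h₁ ω * h₃ ω ∂P + 1 * ∫ ω, h₂ ω * h₃ ω ∂P
      = ∫ ω, h₁ ω * h₁ ω ∂P := by
    have h := key _ hf2 (π/4)
    rw [show (fun ω => (fun M : Matrix (Fin 2) (Fin 2) ℝ => M 0 0 * M 0 0)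
        ((rotMat (π/4))ᵀ * H ω * rotMat (π/4)))
      = fun ω => (1/4 : ℝ) * (h₁ ω * h₁ ω) + (1/4) * (h₂ ω * h₂ ω) + 1 * (h₃ ω * h₃ ω)
        + (1/2) * (h₁ ω * h₂ ω) + 1 * (h₁ ω * h₃ ω) + 1 * (h₂ ω * h₃ ω)
      from funext fun ω => by { rw [q4 ω]; simp; try ring }, r2, isum] at h
    exact h
  -- translate squares into products
  have s1 : ∫ ω, h₁ ω ^ 2 ∂P = ∫ ω, h₁ ω * h₁ ω ∂P := by simp_rw [pow_two]
  have s2 : ∫ ω, h₂ ω ^ 2 ∂P = ∫ ω, h₂ ω * h₂ ω ∂P := by simp_rw [pow_two]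
  have s3 : ∫ ω, h₃ ω ^ 2 ∂P = ∫ ω, h₃ ω * h₃ ω ∂P := by simp_rw [pow_two]
  refine ⟨by linarith, by linarith, by rw [s1, s2]; linarith, by rw [s1, s3]; linarith⟩
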